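/- arXiv:2009.00720 — 9 statements merged into one kernel-verified Lean document; each statement's English description precedes it below -/
import Mathlib

section
/- If λ = 0, then f is identically zero: f(t) = 0 for all t ∈ ℝ. (This is part (1) of Lemma 3.2 of the paper.) -/
/-- Lemma 3.2(1): if `λ = 0`, a global solution of the Riccati equation
`f'(t) = (1/m) f(t)² + λ` is identically zero. -/
theorem riccati_lambda_zero (m lam : ℝ) (hm : m ≠ 0) (f : ℝ → ℝ)
    (hf : ∀ t : ℝ, HasDerivAt f ((1 / m) * (f t) ^ 2 + lam) t)
    (hlam : lam = 0) :
    ∀ t : ℝ, f t = 0 := by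
  subst hlam
  intro t₀
  by_contra hc0
  set c := f t₀ with hc
  have hcont : Continuous f :=
    continuous_iff_continuousAt.mpr fun t => (hf t).continuousAt
  -- antiderivative of f
  set F : ℝ → ℝ := fun t => ∫ x in t₀..t, f x with hF
  have hFd : ∀ t : ℝ, HasDerivAt F (f t) t := by
    intro t
    exact intervalIntegral.integral_hasDerivAt_right
      (hcont.intervalIntegrable _ _)
      (hcont.stronglyMeasurableAtFilter _ _)
      hcont.continuousAt
  -- auxiliary functions
  set A : ℝ → ℝ := fun t => f t * (c⁻¹ - (t - t₀) / m) - 1 with hA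
  set E : ℝ → ℝ := fun t => A t * Real.exp (-F t / m) with hE
  have hAd : ∀ t : ℝ, HasDerivAt A (f t / m * A t) t := by
    intro t
    have h1 : HasDerivAt (fun t : ℝ => c⁻¹ - (t - t₀) / m) (-(1 / m)) t := by
      simpa using
        (((hasDerivAt_id t).sub_const t₀).div_const m).const_sub c⁻¹
    have h2 := ((hf t).fun_mul h1).sub_const 1
    refine h2.congr_deriv ?_
    simp only [hA]
    field_simp [hA]
    ring
  have hEd : ∀ t : ℝ, HasDerivAt E 0 t := by
    intro t
    have h2 := (((hFd t).neg).div_const m).exp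
    have h3 := (hAd t).fun_mul h2
    refine h3.congr_deriv ?_
    ring
  have hconst : ∀ x y : ℝ, E x = E y := by
    intro x y
    exact is_const_of_deriv_eq_zero (fun z => (hEd z).differentiableAt)
      (fun z => (hEd z).deriv) x y
  have hE0 : E t₀ = 0 := by
    simp [hE, hA, hF]
    rw [show f t₀ * (f t₀)⁻¹ = 1 from mul_inv_cancel₀ hc0]
    ring
  have hEs : E (t₀ + m / c) = 0 := (hconst _ t₀).trans hE0
  have hz : c⁻¹ - (t₀ + m / c - t₀) / m = 0 := by
    field_simp
    ring
  simp only [hE, hA] at hEs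
  rw [hz] at hEs
  simp [Real.exp_ne_zero] at hEs
end

section
/- If λ·m > 0, then no such f exists: there is no differentiable function f : ℝ → ℝ defined on all of ℝ with f'(t) = (1/m)·f(t)² + λ for all t ∈ ℝ. (This is part (2) of Lemma 3.2 of the paper.) -/
/-- Lemma 3.2(2): if `λ·m > 0`, there is no globally defined solution of
`f'(t) = (1/m) f(t)² + λ`. -/
theorem riccati_no_global_solution (m lam : ℝ) (hm : m ≠ 0) (h : lam * m > 0) :
    ¬ ∃ f : ℝ → ℝ, ∀ t : ℝ, HasDerivAt f ((1 / m) * (f t) ^ 2 + lam) t := by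
  rintro ⟨f, hf⟩
  set a : ℝ := Real.sqrt (lam * m) with ha_def
  have ha : 0 < a := Real.sqrt_pos.mpr h
  have ha2 : a ^ 2 = lam * m := Real.sq_sqrt h.le
  set c : ℝ := a / m with hc_def
  have hc : c ≠ 0 := div_ne_zero ha.ne' hm
  set g : ℝ → ℝ := fun t => Real.arctan (f t / a) - c * t with hg_def
  have hderiv : ∀ t, HasDerivAt g 0 t := by
    intro t
    have h1 : HasDerivAt (fun t => Real.arctan (f t / a))
        (1 / (1 + (f t / a) ^ 2) * (((1 / m) * (f t) ^ 2 + lam) / a)) t :=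
      ((hf t).div_const a).arctan
    have h2 : HasDerivAt (fun t : ℝ => c * t) c t := by
      simpa using (hasDerivAt_id t).const_mul c
    have key : 1 / (1 + (f t / a) ^ 2) * (((1 / m) * (f t) ^ 2 + lam) / a) = c := by
      rw [hc_def]
      field_simp
      linear_combination (-1) * ha2
    rw [key] at h1
    have h3 := h1.sub h2
    simp only [sub_self] at h3
    exact h3
  have hconst : ∀ t, g t = g 0 := fun t =>
    is_const_of_deriv_eq_zero (fun s => (hderiv s).differentiableAt)
      (fun s => (hderiv s).deriv) t 0
  have := hconst (Real.pi / c)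
  have h0 : Real.arctan (f (Real.pi / c) / a) - Real.pi = Real.arctan (f 0 / a) := by
    have hcc : c * (Real.pi / c) = Real.pi := by field_simp
    simpa [hg_def, hcc] using this
  have b1 := Real.arctan_lt_pi_div_two (f (Real.pi / c) / a)
  have b2 := Real.neg_pi_div_two_lt_arctan (f 0 / a)
  have hpi := Real.pi_pos
  linarith
end

section
/- If λ·m < 0, then exactly one of the following holds: f is the constant function √(−λm), f is the constant function −√(−λm), or there exists a constant C ∈ ℝ such that f(t) = −√(−λm)·tanh((√(−λm)/m)·(t + C)) for all t ∈ ℝ. (This is part (3) of Lemma 3.2 of the paper, with the sign of the tanh solution as in the proof of Lemma 2.3.) -/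
/-- Solutions of the linear ODE `g' = c g` are `g 0 * exp (∫ c)`. -/
private lemma lin_ode (c g : ℝ → ℝ) (hc : Continuous c)
    (hg : ∀ t, HasDerivAt g (c t * g t) t) (t : ℝ) :
    g t = g 0 * Real.exp (∫ s in (0:ℝ)..t, c s) := by
  set G : ℝ → ℝ := fun u => ∫ s in (0:ℝ)..u, c s with hGdef
  have hG : ∀ u, HasDerivAt G (c u) u := fun u =>
    (hc.integral_hasStrictDerivAt 0 u).hasDerivAt
  have key : ∀ u, HasDerivAt (fun v => g v * Real.exp (-G v)) 0 u := by
    intro u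
    have h1 : HasDerivAt (fun v => Real.exp (-G v)) (Real.exp (-G u) * (-(c u))) u := by
      simpa [mul_comm] using ((hG u).neg).exp
    have h2 : HasDerivAt (fun v => g v * Real.exp (-G v)) _ u := (hg u).mul h1
    convert h2 using 1
    ring
  have hconst : g t * Real.exp (-G t) = g 0 * Real.exp (-G 0) :=
    is_const_of_deriv_eq_zero (fun v => (key v).differentiableAt)
      (fun v => (key v).deriv) t 0
  have h0 : G 0 = 0 := intervalIntegral.integral_same
  rw [h0, neg_zero, Real.exp_zero, mul_one] at hconst
  calc g t = g t * Real.exp (-G t) * Real.exp (G t) := by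
        rw [mul_assoc, ← Real.exp_add]; simp
    _ = g 0 * Real.exp (G t) := by rw [hconst]

private lemma lin_ode_const (c : ℝ) (g : ℝ → ℝ)
    (hg : ∀ t, HasDerivAt g (c * g t) t) (t : ℝ) :
    g t = g 0 * Real.exp (c * t) := by
  have := lin_ode (fun _ => c) g continuous_const hg t
  simpa [mul_comm] using this

private lemma tanh_formula (a x : ℝ) :
    a * (Real.exp (-(2 * x)) - 1) / (Real.exp (-(2 * x)) + 1) = -a * Real.tanh x := by
  rw [Real.tanh_eq_sinh_div_cosh, Real.sinh_eq, Real.cosh_eq]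
  have h1 : Real.exp (-(2 * x)) = Real.exp (-x) * Real.exp (-x) := by
    rw [← Real.exp_add]; ring_nf
  have h2 : Real.exp x * Real.exp (-x) = 1 := by
    rw [← Real.exp_add]; simp
  have hd1 : Real.exp (-x) * Real.exp (-x) + 1 > 0 := by positivity
  have hd2 : Real.exp x + Real.exp (-x) > 0 := by positivity
  rw [h1]
  field_simp
  ring_nf
  linear_combination (2 * a * Real.exp (-x)) * h2

/-- Lemma 3.2(3): if `λ·m < 0`, then exactly one of the following holds:
`f ≡ √(−λm)`, `f ≡ −√(−λm)`, or `f(t) = −√(−λm)·tanh((√(−λm)/m)(t+C))` for some `C`. -/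
theorem riccati_lambda_m_neg_trichotomy (m lam : ℝ) (hm : m ≠ 0) (f : ℝ → ℝ)
    (hf : ∀ t : ℝ, HasDerivAt f ((1 / m) * (f t) ^ 2 + lam) t)
    (h : lam * m < 0) :
    ((∀ t : ℝ, f t = Real.sqrt (-(lam * m))) ∨
      (∀ t : ℝ, f t = -Real.sqrt (-(lam * m))) ∨
      (∃ C : ℝ, ∀ t : ℝ,
        f t = -Real.sqrt (-(lam * m)) * Real.tanh ((Real.sqrt (-(lam * m)) / m) * (t + C)))) ∧
    ¬ ((∀ t : ℝ, f t = Real.sqrt (-(lam * m))) ∧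
        (∀ t : ℝ, f t = -Real.sqrt (-(lam * m)))) ∧
    ¬ ((∀ t : ℝ, f t = Real.sqrt (-(lam * m))) ∧
        (∃ C : ℝ, ∀ t : ℝ,
          f t = -Real.sqrt (-(lam * m)) * Real.tanh ((Real.sqrt (-(lam * m)) / m) * (t + C)))) ∧
    ¬ ((∀ t : ℝ, f t = -Real.sqrt (-(lam * m))) ∧
        (∃ C : ℝ, ∀ t : ℝ,
          f t = -Real.sqrt (-(lam * m)) * Real.tanh ((Real.sqrt (-(lam * m)) / m) * (t + C)))) := by
  set a : ℝ := Real.sqrt (-(lam * m)) with ha_def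
  have hlm : (0:ℝ) < -(lam * m) := by linarith
  have ha : 0 < a := Real.sqrt_pos.mpr hlm
  have ha2 : a ^ 2 = -(lam * m) := Real.sq_sqrt hlm.le
  have hf' : ∀ t, HasDerivAt f ((f t ^ 2 - a ^ 2) / m) t := by
    intro t
    convert hf t using 1
    rw [ha2]
    field_simp
    ring
  have hfc : Continuous f := by
    rw [continuous_iff_continuousAt]
    exact fun t => (hf t).continuousAt
  -- the three formulas are mutually exclusive
  refine ⟨?_, ?_, ?_, ?_⟩
  case refine_2 =>
    rintro ⟨h1, h2⟩
    have := (h1 0).symm.trans (h2 0)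
    linarith
  case refine_3 =>
    rintro ⟨h1, ⟨C, h3⟩⟩
    have := (h1 (-C)).symm.trans (h3 (-C))
    simp only [neg_add_cancel, mul_zero, Real.tanh_zero] at this
    linarith
  case refine_4 =>
    rintro ⟨h1, ⟨C, h3⟩⟩
    have := (h1 (-C)).symm.trans (h3 (-C))
    simp only [neg_add_cancel, mul_zero, Real.tanh_zero] at this
    linarith
  -- main trichotomy
  set U : ℝ → ℝ := fun t => a ^ 2 - f t ^ 2 with hU_def
  have hU : ∀ t, HasDerivAt U ((2 * f t / m) * U t) t := by
    intro t
    have : HasDerivAt (fun x => a ^ 2 - f x ^ 2) _ t := ((hf' t).pow 2).const_sub (a ^ 2)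
    convert this using 1
    simp [hU_def]
    field_simp
    ring
  have hUc : Continuous (fun t => 2 * f t / m) := by continuity
  have hUeq : ∀ t, U t = U 0 * Real.exp (∫ s in (0:ℝ)..t, 2 * f s / m) :=
    lin_ode _ U hUc hU
  rcases lt_trichotomy (U 0) 0 with h0 | h0 | h0
  · -- U < 0 everywhere: impossible
    exfalso
    have hUneg : ∀ t, U t < 0 := by
      intro t
      rw [hUeq t]
      exact mul_neg_of_neg_of_pos h0 (Real.exp_pos _)
    have hne : ∀ t, f t + a ≠ 0 := by
      intro t hc
      have := hUneg t
      simp only [hU_def] at this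
      nlinarith
    set z : ℝ → ℝ := fun t => (f t - a) / (f t + a) with hz_def
    have hz : ∀ t, HasDerivAt z ((2 * a / m) * z t) t := by
      intro t
      have : HasDerivAt (fun x => (f x - a) / (f x + a)) _ t := ((hf' t).sub_const a).div ((hf' t).add_const a) (hne t)
      convert this using 1
      simp only [hz_def]
      field_simp [hne t]
      ring
    have hzeq : ∀ t, z t = z 0 * Real.exp ((2 * a / m) * t) := lin_ode_const _ z hz
    have hz0 : 0 < z 0 := by
      have hq : 0 < (f 0 - a) * (f 0 + a) := by
        have := hUneg 0
        simp only [hU_def] at this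
        nlinarith
      rcases lt_or_gt_of_ne (hne 0) with hd | hd
      · exact div_pos_of_neg_of_neg (by nlinarith) hd
      · exact div_pos (by nlinarith) hd
    have hzne1 : ∀ t, z t ≠ 1 := by
      intro t hc
      rw [hz_def] at hc
      rw [div_eq_one_iff_eq (hne t)] at hc
      linarith
    have hcm : 2 * a / m ≠ 0 := by
      apply div_ne_zero
      · positivity
      · exact hm
    set tstar : ℝ := -(Real.log (z 0)) / (2 * a / m) with ht_def
    apply hzne1 tstar
    rw [hzeq tstar, ht_def]
    have harg : (2 * a / m) * (-(Real.log (z 0)) / (2 * a / m)) = -(Real.log (z 0)) := by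
      field_simp
    rw [harg, Real.exp_neg, Real.exp_log hz0, mul_inv_cancel₀ (ne_of_gt hz0)]
  · -- U ≡ 0 : constant solutions
    have hUzero : ∀ t, U t = 0 := by
      intro t; rw [hUeq t, h0, zero_mul]
    have hfa : ∀ t, f t = a ∨ f t = -a := by
      intro t
      have : (f t - a) * (f t + a) = 0 := by
        have := hUzero t; simp only [hU_def] at this; nlinarith
      rcases mul_eq_zero.mp this with h | h
      · left; linarith
      · right; linarith
    have key : ∀ t₁ t₂, f t₁ = a → f t₂ = -a → False := by
      intro t₁ t₂ h1 h2
      have hmem : (0:ℝ) ∈ Set.uIcc (f t₁) (f t₂) := by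
        rw [h1, h2]
        exact Set.mem_uIcc.mpr (Or.inr ⟨by linarith, by linarith⟩)
      obtain ⟨s, _, hs⟩ := intermediate_value_uIcc hfc.continuousOn hmem
      rcases hfa s with hh | hh <;> rw [hh] at hs <;> linarith
    rcases hfa 0 with h00 | h00
    · left
      intro t
      rcases hfa t with hh | hh
      · exact hh
      · exact absurd (key 0 t h00 hh) (by simp)
    · right; left
      intro t
      rcases hfa t with hh | hh
      · exact absurd (key t 0 hh h00) (by simp)
      · exact hh
  · -- U > 0 everywhere : the tanh solution
    right; right
    have hUpos : ∀ t, 0 < U t := by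
      intro t
      rw [hUeq t]
      exact mul_pos h0 (Real.exp_pos _)
    have hlt : ∀ t, -a < f t ∧ f t < a := by
      intro t
      have := hUpos t
      simp only [hU_def] at this
      constructor <;> nlinarith
    have hne : ∀ t, a - f t ≠ 0 := fun t => by have := (hlt t).2; linarith
    set w : ℝ → ℝ := fun t => (a + f t) / (a - f t) with hw_def
    have hw : ∀ t, HasDerivAt w ((-(2 * a / m)) * w t) t := by
      intro t
      have : HasDerivAt (fun x => (a + f x) / (a - f x)) _ t := ((hf' t).const_add a).div ((hf' t).const_sub a) (hne t)
      convert this using 1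
      simp only [hw_def]
      field_simp [hne t]
      ring
    have hweq : ∀ t, w t = w 0 * Real.exp ((-(2 * a / m)) * t) := lin_ode_const _ w hw
    have hw0 : 0 < w 0 := by
      have h1 := (hlt 0).1
      have h2 := (hlt 0).2
      exact div_pos (by linarith) (by linarith)
    set C : ℝ := -(m / (2 * a)) * Real.log (w 0) with hC_def
    refine ⟨C, fun t => ?_⟩
    have hwC : w t = Real.exp (-(2 * (a / m * (t + C)))) := by
      have hC : Real.exp ((-(2 * a / m)) * C) = w 0 := by
        have harg2 : (-(2 * a / m)) * C = Real.log (w 0) := by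
          rw [hC_def]
          field_simp
        rw [harg2, Real.exp_log hw0]
      rw [hweq t, ← hC, ← Real.exp_add]
      congr 1
      field_simp
      ring
    have hft : f t = a * (w t - 1) / (w t + 1) := by
      have hwp : 0 < w t := by
        have h1 := (hlt t).1
        have h2 := (hlt t).2
        exact div_pos (by linarith) (by linarith)
      have heq : w t * (a - f t) = a + f t := by
        rw [hw_def]
        exact div_mul_cancel₀ _ (hne t)
      have hw1 : w t + 1 ≠ 0 := by positivity
      field_simp
      nlinarith [heq]
    rw [hft, hwC]
    exact tanh_formula a (a / m * (t + C))
end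

section
/- If λ·m < 0, then every such global solution is bounded, with f(t)² ≤ −λm for all t ∈ ℝ. -/
/-- Key lemma: if `m > 0`, `c > 0`, `f' = (f² - c²)/m` globally and `f t₀ > c`
for some `t₀`, we get a contradiction (finite-time blow-up). -/
lemma riccati_key (m c : ℝ) (hm : 0 < m) (hc : 0 < c) (f : ℝ → ℝ)
    (hf : ∀ t : ℝ, HasDerivAt f ((f t ^ 2 - c ^ 2) / m) t)
    (t₀ : ℝ) (h0 : c < f t₀) : False := by
  have hcont : Continuous f :=
    continuous_iff_continuousAt.2 fun t => (hf t).continuousAt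
  -- Step 1: f stays above c for all t ≥ t₀
  have step1 : ∀ t, t₀ ≤ t → c < f t := by
    intro t ht
    by_contra hle
    push_neg at hle
    set S : Set ℝ := Set.Icc t₀ t ∩ f ⁻¹' Set.Iic c with hS
    have hne : S.Nonempty := ⟨t, ⟨⟨ht, le_refl t⟩, hle⟩⟩
    have hbdd : BddBelow S := ⟨t₀, fun s hs => hs.1.1⟩
    have hScl : IsClosed S :=
      IsClosed.inter isClosed_Icc (isClosed_Iic.preimage hcont)
    set s := sInf S with hs
    have hsS : s ∈ S := hScl.csInf_mem hne hbdd
    have hst₀ : t₀ ≤ s := hsS.1.1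
    have hst : s ≤ t := hsS.1.2
    have hfs : f s ≤ c := hsS.2
    -- on [t₀, s), f > c
    have hgt : ∀ u, t₀ ≤ u → u < s → c < f u := by
      intro u hu1 hu2
      by_contra hle'
      push_neg at hle'
      have : u ∈ S := ⟨⟨hu1, le_trans hu2.le hst⟩, hle'⟩
      exact absurd (csInf_le hbdd this) (not_le.2 hu2)
    -- f is monotone on [t₀, s]
    have mono : MonotoneOn f (Set.Icc t₀ s) := by
      apply monotoneOn_of_deriv_nonneg (convex_Icc t₀ s) hcont.continuousOn
      · intro u hu
        exact ((hf u).differentiableAt).differentiableWithinAt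
      · intro u hu
        rw [interior_Icc] at hu
        have hfu : c < f u := hgt u hu.1.le hu.2
        rw [(hf u).deriv]
        have hle2 : c ^ 2 ≤ f u ^ 2 := by nlinarith
        exact div_nonneg (by linarith) hm.le
    have : f t₀ ≤ f s :=
      mono ⟨le_refl t₀, hst₀⟩ ⟨hst₀, le_refl s⟩ hst₀
    linarith
  -- Step 2: h t = 1/(f t - c) + t/m is antitone on [t₀, ∞)
  set h : ℝ → ℝ := fun t => (f t - c)⁻¹ + t / m with hh
  have hderiv : ∀ t, t₀ ≤ t →
      HasDerivAt h (-((f t ^ 2 - c ^ 2) / m) / (f t - c) ^ 2 + 1 / m) t := by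
    intro t ht
    have hne : f t - c ≠ 0 := by have := step1 t ht; linarith
    exact (((hf t).sub_const c).inv hne).add ((hasDerivAt_id t).div_const m)
  have anti : AntitoneOn h (Set.Ici t₀) := by
    apply antitoneOn_of_deriv_nonpos (convex_Ici t₀)
    · intro u hu
      exact (hderiv u hu).continuousAt.continuousWithinAt
    · intro u hu
      rw [interior_Ici] at hu
      exact (hderiv u hu.le).differentiableAt.differentiableWithinAt
    · intro u hu
      rw [interior_Ici] at hu
      rw [(hderiv u hu.le).deriv]
      have hfu : c < f u := step1 u hu.le
      have ha : 0 < f u - c := by linarith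
      have key : (f u - c) ^ 2 ≤ f u ^ 2 - c ^ 2 := by nlinarith
      have h1 : (f u - c) ^ 2 / m ≤ (f u ^ 2 - c ^ 2) / m :=
        div_le_div_of_nonneg_right key hm.le
      have h2 : (f u - c) ^ 2 / m / (f u - c) ^ 2 ≤
          (f u ^ 2 - c ^ 2) / m / (f u - c) ^ 2 :=
        div_le_div_of_nonneg_right h1 (by positivity)
      have h3 : (f u - c) ^ 2 / m / (f u - c) ^ 2 = 1 / m := by
        field_simp
      have h4 : -((f u ^ 2 - c ^ 2) / m) / (f u - c) ^ 2 =
          -((f u ^ 2 - c ^ 2) / m / (f u - c) ^ 2) := neg_div _ _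
      rw [h4]
      linarith
  -- finish: evaluate at T = t₀ + m * ((f t₀ - c)⁻¹ + 1)
  set T : ℝ := t₀ + m * ((f t₀ - c)⁻¹ + 1) with hT
  have hinv0 : 0 < (f t₀ - c)⁻¹ := by
    have : 0 < f t₀ - c := by linarith
    positivity
  have hTt₀ : t₀ ≤ T := by rw [hT]; nlinarith
  have hhT : h T ≤ h t₀ := anti (Set.self_mem_Ici) (Set.mem_Ici.2 hTt₀) hTt₀
  have hinvT : 0 < (f T - c)⁻¹ := by
    have := step1 T hTt₀; have : 0 < f T - c := by linarith
    positivity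
  have hTm : T / m = t₀ / m + ((f t₀ - c)⁻¹ + 1) := by
    field_simp [hT]; ring
  simp only [hh] at hhT
  rw [hTm] at hhT
  linarith

/-- If `λ·m < 0`, every global solution of the Riccati equation satisfies
`f(t)² ≤ −λm` for all `t`. -/
theorem riccati_lambda_m_neg_bounded (m lam : ℝ) (hm : m ≠ 0) (f : ℝ → ℝ)
    (hf : ∀ t : ℝ, HasDerivAt f ((1 / m) * (f t) ^ 2 + lam) t)
    (h : lam * m < 0) :
    ∀ t : ℝ, (f t) ^ 2 ≤ -(lam * m) := by
  set c : ℝ := Real.sqrt (-(lam * m)) with hcdef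
  have hpos : 0 < -(lam * m) := by linarith
  have hc : 0 < c := Real.sqrt_pos.2 hpos
  have hc2 : c ^ 2 = -(lam * m) := Real.sq_sqrt hpos.le
  have he : ∀ t : ℝ, HasDerivAt f ((f t ^ 2 - c ^ 2) / m) t := by
    intro t
    convert hf t using 1
    rw [hc2]
    field_simp
    try ring
  by_contra hcon
  push_neg at hcon
  obtain ⟨t₀, ht₀⟩ := hcon
  rw [← hc2] at ht₀
  -- so c < |f t₀|
  have habs : c < f t₀ ∨ c < -f t₀ := by
    rcases le_or_gt 0 (f t₀) with hsgn | hsgn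
    · left; nlinarith
    · right; nlinarith
  rcases lt_or_gt_of_ne hm with hmneg | hmpos
  · -- m < 0
    have hm' : 0 < -m := by linarith
    rcases habs with hA | hA
    · -- use g s = f (-s)
      refine riccati_key (-m) c hm' hc (fun s => f (-s)) ?_ (-t₀) (by simpa using hA)
      intro s
      have := (he (-s)).comp s (hasDerivAt_neg s)
      refine this.congr_deriv ?_
      field_simp
      try ring
    · -- use g s = -f s
      refine riccati_key (-m) c hm' hc (fun s => -f s) ?_ t₀ (by simpa using hA)
      intro s
      have := (he s).neg
      refine this.congr_deriv ?_
      field_simp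
      try ring
  · -- m > 0
    rcases habs with hA | hA
    · exact riccati_key m c hmpos hc f he t₀ hA
    · -- use g s = -f (-s)
      refine riccati_key m c hmpos hc (fun s => -f (-s)) ?_ (-t₀) (by simpa using hA)
      intro s
      have := ((he (-s)).comp s (hasDerivAt_neg s)).neg
      refine this.congr_deriv ?_
      ring
end

section
/- If λ·m < 0, then f(t) converges as t → +∞ and as t → −∞, and each of the two limits is equal to √(−λm) or to −√(−λm). -/
open Filter Set
open Filter Set

private lemma deriv_lim_zero (f g : ℝ → ℝ) (hf : ∀ t, HasDerivAt f (g t) t)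
    (L c : ℝ) (h1 : Tendsto f atTop (nhds L)) (h2 : Tendsto g atTop (nhds c)) : c = 0 := by
  have hmvt : ∀ n : ℕ, ∃ ξ ∈ Ioo (n : ℝ) (n + 1), g ξ = (f (n + 1) - f n) / ((n + 1) - n) := by
    intro n
    exact exists_hasDerivAt_eq_slope f g (by linarith)
      (fun x _ => (hf x).continuousAt.continuousWithinAt) (fun x _ => hf x)
  choose ξ hmem hval using hmvt
  have hξtop : Tendsto ξ atTop atTop :=
    tendsto_atTop_mono (fun n => (hmem n).1.le) tendsto_natCast_atTop_atTop
  have q1 : Tendsto (fun n => g (ξ n)) atTop (nhds c) := h2.comp hξtop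
  have q2 : Tendsto (fun n : ℕ => (f ((n : ℝ) + 1) - f n) / (((n : ℝ) + 1) - n)) atTop (nhds 0) := by
    have e1 : Tendsto (fun n : ℕ => f ((n : ℝ) + 1)) atTop (nhds L) :=
      h1.comp (tendsto_atTop_add_const_right _ 1 tendsto_natCast_atTop_atTop)
    have e2 : Tendsto (fun n : ℕ => f (n : ℝ)) atTop (nhds L) :=
      h1.comp tendsto_natCast_atTop_atTop
    have := (e1.sub e2)
    simpa using this
  have q1' : Tendsto (fun n : ℕ => (f ((n : ℝ) + 1) - f n) / (((n : ℝ) + 1) - n)) atTop (nhds c) := by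
    have : (fun n : ℕ => g (ξ n)) = fun n : ℕ => (f ((n : ℝ) + 1) - f n) / (((n : ℝ) + 1) - n) := by
      funext n; exact hval n
    rwa [this] at q1
  exact tendsto_nhds_unique q1' q2

private lemma riccati_bound (m lam : ℝ) (hm : 0 < m) (f : ℝ → ℝ)
    (hf : ∀ t : ℝ, HasDerivAt f ((1 / m) * (f t) ^ 2 + lam) t)
    (h : lam * m < 0) : ∀ t, f t ≤ Real.sqrt (-(lam * m)) := by
  set a := Real.sqrt (-(lam * m)) with ha
  have ha0 : 0 ≤ a := Real.sqrt_nonneg _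
  have ha2 : a ^ 2 = -(lam * m) := Real.sq_sqrt (by linarith)
  have hm' : (0:ℝ) < 1 / m := by positivity
  have key : (1:ℝ) / m * a ^ 2 + lam = 0 := by rw [ha2]; field_simp; ring
  have hdiff : Differentiable ℝ f := fun t => (hf t).differentiableAt
  have hcf : Continuous f := hdiff.continuous
  have hdpos : ∀ x : ℝ, a < f x → 0 < deriv f x := by
    intro x hx
    rw [(hf x).deriv]
    have h2 : a ^ 2 < f x ^ 2 := by nlinarith
    nlinarith [mul_pos hm' (sub_pos.2 h2)]
  -- main contradiction
  by_contra hcon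
  push_neg at hcon
  obtain ⟨t0, ht0⟩ := hcon
  set c := f t0 with hc
  -- claim 1 : f stays above a on [t0, ∞)
  have claim1 : ∀ t ∈ Ici t0, a < f t := by
    by_contra hno
    push_neg at hno
    obtain ⟨t1, ht1, hft1⟩ := hno
    have ht01 : t0 < t1 := by
      rcases lt_or_eq_of_le (mem_Ici.mp ht1) with h' | h'
      · exact h'
      · exfalso; rw [← h'] at hft1; exact absurd hft1 (not_le.2 ht0)
    set S := {s ∈ Icc t0 t1 | f s ≤ a} with hS
    have hSne : S.Nonempty := ⟨t1, ⟨le_of_lt ht01, le_refl _⟩, hft1⟩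
    have hSclosed : IsClosed S := by
      have : S = Icc t0 t1 ∩ f ⁻¹' Iic a := by ext s; simp [hS, and_assoc]
      rw [this]; exact isClosed_Icc.inter (isClosed_Iic.preimage hcf)
    have hSbdd : BddBelow S := ⟨t0, fun s hs => hs.1.1⟩
    set T := sInf S with hT
    have hTS : T ∈ S := hSclosed.csInf_mem hSne hSbdd
    have hTt0 : t0 < T := by
      rcases lt_or_eq_of_le hTS.1.1 with h' | h'
      · exact h'
      · exfalso; rw [← h'] at hTS; exact absurd hTS.2 (not_le.2 ht0)
    have hbelow : ∀ s ∈ Ico t0 T, a < f s := by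
      intro s hs
      by_contra hsa
      push_neg at hsa
      have : s ∈ S := ⟨⟨hs.1, le_trans hs.2.le hTS.1.2⟩, hsa⟩
      exact absurd (csInf_le hSbdd this) (not_le.2 hs.2)
    have hmono : StrictMonoOn f (Icc t0 T) := by
      apply strictMonoOn_of_deriv_pos (convex_Icc t0 T) hcf.continuousOn
      intro x hx
      rw [interior_Icc] at hx
      exact hdpos x (hbelow x ⟨hx.1.le, hx.2⟩)
    have : f t0 < f T := hmono ⟨le_refl _, hTt0.le⟩ ⟨hTt0.le, le_refl _⟩ hTt0
    have : a < f T := lt_trans ht0 this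
    exact absurd hTS.2 (not_le.2 this)
  -- claim 2 : f monotone on [t0, ∞), hence f ≥ c there
  have claim2 : ∀ t ∈ Ici t0, c ≤ f t := by
    have hmono : MonotoneOn f (Ici t0) := by
      apply monotoneOn_of_deriv_nonneg (convex_Ici t0) hcf.continuousOn
        (hdiff.differentiableOn)
      intro x hx
      rw [interior_Ici] at hx
      exact (hdpos x (claim1 x (mem_Ici.mpr (le_of_lt hx)))).le
    intro t ht
    exact hmono (self_mem_Ici) ht (mem_Ici.mp ht)
  have hca : a < c := ht0
  have hc0 : 0 < c := lt_of_le_of_lt ha0 hca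
  -- blow-up via 1/f
  set ε := (c ^ 2 - a ^ 2) / (m * c ^ 2) with hε
  have hε0 : 0 < ε := by
    apply div_pos (by nlinarith) (by positivity)
  set φ := fun t => (f t)⁻¹ + ε * t with hφ
  have hfpos : ∀ t ∈ Ici t0, 0 < f t := fun t ht => lt_of_lt_of_le hc0 (claim2 t ht)
  have hφder : ∀ x ∈ Ici t0, HasDerivAt φ (-((1 / m) * (f x) ^ 2 + lam) / (f x) ^ 2 + ε) x := by
    intro x hx
    exact ((hf x).inv (hfpos x hx).ne').add ((hasDerivAt_id x).const_mul ε |>.congr_deriv (mul_one ε))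
  have hanti : AntitoneOn φ (Ici t0) := by
    apply antitoneOn_of_deriv_nonpos (convex_Ici t0)
    · apply ContinuousOn.add
      · exact ContinuousOn.inv₀ hcf.continuousOn (fun t ht => (hfpos t ht).ne')
      · exact (continuous_const.mul continuous_id).continuousOn
    · intro x hx
      rw [interior_Ici] at hx
      exact ((hφder x (mem_Ici.mpr (le_of_lt hx))).differentiableAt).differentiableWithinAt
    · intro x hx
      rw [interior_Ici] at hx
      rw [(hφder x (mem_Ici.mpr (le_of_lt hx))).deriv]
      have hcx : c ≤ f x := claim2 x (mem_Ici.mpr (le_of_lt hx))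
      have hfx : 0 < f x := lt_of_lt_of_le hc0 hcx
      rw [hε]
      rw [div_add_div _ _ (by positivity : (f x)^2 ≠ 0) (by positivity : m * c^2 ≠ 0)]
      apply div_nonpos_of_nonpos_of_nonneg _ (by positivity)
      have key2 : (1:ℝ) / m * (f x) ^ 2 + lam = ((f x)^2 - a^2) / m := by
        field_simp; nlinarith [key]
      rw [key2]
      have expand : -(((f x)^2 - a^2) / m) * (m * c^2) = -(((f x)^2 - a^2) * c^2) := by
        field_simp
      rw [expand]
      nlinarith [sq_nonneg (f x * c), mul_le_mul_of_nonneg_left (by nlinarith : c^2 ≤ (f x)^2) (by nlinarith : (0:ℝ) ≤ a^2)]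
  -- contradiction: φ decreases linearly but 1/f stays positive
  set t2 := t0 + (c⁻¹ + 1) / ε with ht2
  have ht2mem : t0 ≤ t2 := by
    have h9 : 0 < (c⁻¹ + 1) / ε := by positivity
    rw [ht2]; linarith
  have hle : φ t2 ≤ φ t0 := hanti self_mem_Ici ht2mem ht2mem
  have h1 : (0:ℝ) < (f t2)⁻¹ := by
    have := hfpos t2 ht2mem
    positivity
  have hεt2 : ε * t2 = ε * t0 + (c⁻¹ + 1) := by
    rw [ht2]; field_simp
  rw [hφ] at hle
  simp only at hle
  rw [hεt2] at hle
  have : (f t2)⁻¹ ≤ -1 := by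
    have hct0 : (f t0)⁻¹ = c⁻¹ := by rw [hc]
    rw [hct0] at hle
    linarith
  linarith

private lemma riccati_pos (m lam : ℝ) (hm : 0 < m) (f : ℝ → ℝ)
    (hf : ∀ t : ℝ, HasDerivAt f ((1 / m) * (f t) ^ 2 + lam) t)
    (h : lam * m < 0) :
    (∃ L : ℝ, Tendsto f atTop (nhds L) ∧
      (L = Real.sqrt (-(lam * m)) ∨ L = -Real.sqrt (-(lam * m)))) ∧
    (∃ L : ℝ, Tendsto f atBot (nhds L) ∧
      (L = Real.sqrt (-(lam * m)) ∨ L = -Real.sqrt (-(lam * m)))) := by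
  set a := Real.sqrt (-(lam * m)) with ha
  have ha0 : 0 ≤ a := Real.sqrt_nonneg _
  have ha2 : a ^ 2 = -(lam * m) := Real.sq_sqrt (by linarith)
  have hm' : (0:ℝ) < 1 / m := by positivity
  have hdiff : Differentiable ℝ f := fun t => (hf t).differentiableAt
  -- upper bound
  have hub : ∀ t, f t ≤ a := riccati_bound m lam hm f hf h
  -- lower bound, by symmetry g t = -f (-t)
  have hlb : ∀ t, -a ≤ f t := by
    set g := fun t => -f (-t) with hgdef
    have hg : ∀ t : ℝ, HasDerivAt g ((1 / m) * (g t) ^ 2 + lam) t := by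
      intro t
      have h1 : HasDerivAt (fun s : ℝ => f (-s)) ((1 / m * (f (-t)) ^ 2 + lam) * (-1)) t :=
        (hf (-t)).comp t (hasDerivAt_neg t)
      have h2 := h1.neg
      have h3 : -((1 / m * (f (-t)) ^ 2 + lam) * (-1)) = (1 / m) * (g t) ^ 2 + lam := by
        simp only [hgdef]; ring
      rw [h3] at h2
      exact h2
    have := riccati_bound m lam hm g hg h
    intro t
    have h4 := this (-t)
    simp only [hgdef, neg_neg] at h4
    linarith
  -- f is antitone
  have hanti : Antitone f := by
    apply antitone_of_deriv_nonpos hdiff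
    intro x
    rw [(hf x).deriv]
    have h2 : f x ^ 2 ≤ a ^ 2 := sq_le_sq' (hlb x) (hub x)
    have key : (1:ℝ) / m * a ^ 2 + lam = 0 := by rw [ha2]; field_simp; ring
    nlinarith [mul_le_mul_of_nonneg_left h2 hm'.le, key]
  have hbdd_below : BddBelow (Set.range f) := ⟨-a, fun y hy => by
    obtain ⟨t, rfl⟩ := hy; exact hlb t⟩
  have hbdd_above : BddAbove (Set.range f) := ⟨a, fun y hy => by
    obtain ⟨t, rfl⟩ := hy; exact hub t⟩
  -- limit identification function
  have identify : ∀ L : ℝ, (1 / m) * L ^ 2 + lam = 0 → (L = a ∨ L = -a) := by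
    intro L hL
    have hL2 : L ^ 2 = a ^ 2 := by
      rw [ha2]
      field_simp at hL
      nlinarith [hL]
    have hfac : (L - a) * (L + a) = 0 := by nlinarith [hL2]
    rcases mul_eq_zero.mp hfac with h' | h'
    · left; linarith [sub_eq_zero.mp h']
    · right; linarith [eq_neg_of_add_eq_zero_left h']
  constructor
  · -- limit at +∞
    set L := ⨅ t, f t with hL
    have hLtop : Tendsto f atTop (nhds L) := tendsto_atTop_ciInf hanti hbdd_below
    have hDtend : Tendsto (fun t => (1 / m) * (f t) ^ 2 + lam) atTop
        (nhds ((1 / m) * L ^ 2 + lam)) :=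
      ((hLtop.pow 2).const_mul (1 / m)).add_const lam
    have hzero := deriv_lim_zero f _ hf L _ hLtop hDtend
    exact ⟨L, hLtop, identify L hzero⟩
  · -- limit at −∞
    set M := ⨆ t, f t with hM
    have hMbot : Tendsto f atBot (nhds M) := tendsto_atBot_ciSup hanti hbdd_above
    set F := fun t : ℝ => f (-t) with hFdef
    have hF : ∀ t : ℝ, HasDerivAt F (-((1 / m) * (F t) ^ 2 + lam)) t := by
      intro t
      have h1 : HasDerivAt F ((1 / m * (f (-t)) ^ 2 + lam) * (-1)) t :=
        (hf (-t)).comp t (hasDerivAt_neg t)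
      have h3 : (1 / m * (f (-t)) ^ 2 + lam) * (-1) = -((1 / m) * (F t) ^ 2 + lam) := by
        simp only [hFdef]; ring
      rwa [h3] at h1
    have hFtend : Tendsto F atTop (nhds M) := hMbot.comp tendsto_neg_atTop_atBot
    have hDtend : Tendsto (fun t => -((1 / m) * (F t) ^ 2 + lam)) atTop
        (nhds (-((1 / m) * M ^ 2 + lam))) :=
      (((hFtend.pow 2).const_mul (1 / m)).add_const lam).neg
    have hzero := deriv_lim_zero F _ hF M _ hFtend hDtend
    have hzero' : (1 / m) * M ^ 2 + lam = 0 := by linarith [hzero]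
    exact ⟨M, hMbot, identify M hzero'⟩

/-- If `λ·m < 0`, then `f` converges as `t → +∞` and as `t → −∞`, and each limit
equals `√(−λm)` or `−√(−λm)`. -/
theorem riccati_limits (m lam : ℝ) (hm : m ≠ 0) (f : ℝ → ℝ)
    (hf : ∀ t : ℝ, HasDerivAt f ((1 / m) * (f t) ^ 2 + lam) t)
    (h : lam * m < 0) :
    (∃ L : ℝ, Filter.Tendsto f Filter.atTop (nhds L) ∧
      (L = Real.sqrt (-(lam * m)) ∨ L = -Real.sqrt (-(lam * m)))) ∧
    (∃ L : ℝ, Filter.Tendsto f Filter.atBot (nhds L) ∧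
      (L = Real.sqrt (-(lam * m)) ∨ L = -Real.sqrt (-(lam * m)))) := by
  rcases hm.lt_or_gt with hneg | hpos
  · -- m < 0 : reduce to the positive case via g t = f (-t)
    set g := fun t : ℝ => f (-t) with hgdef
    have hg : ∀ t : ℝ, HasDerivAt g ((1 / (-m)) * (g t) ^ 2 + (-lam)) t := by
      intro t
      have h1 : HasDerivAt g ((1 / m * (f (-t)) ^ 2 + lam) * (-1)) t :=
        (hf (-t)).comp t (hasDerivAt_neg t)
      have h3 : (1 / m * (f (-t)) ^ 2 + lam) * (-1) = (1 / (-m)) * (g t) ^ 2 + (-lam) := by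
        simp only [hgdef]
        rw [div_neg]
        ring
      rwa [h3] at h1
    have hprod : (-lam) * (-m) < 0 := by rw [neg_mul_neg]; exact h
    obtain ⟨⟨L1, hL1, hL1eq⟩, ⟨L2, hL2, hL2eq⟩⟩ :=
      riccati_pos (-m) (-lam) (neg_pos.mpr hneg) g hg hprod
    rw [neg_mul_neg] at hL1eq hL2eq
    constructor
    · -- f at +∞ comes from g at −∞
      refine ⟨L2, ?_, hL2eq⟩
      have : Tendsto (fun t => g (-t)) atTop (nhds L2) := hL2.comp tendsto_neg_atTop_atBot
      simpa [hgdef, neg_neg] using this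
    · refine ⟨L1, ?_, hL1eq⟩
      have : Tendsto (fun t => g (-t)) atBot (nhds L1) := hL1.comp tendsto_neg_atBot_atTop
      simpa [hgdef, neg_neg] using this
  · exact riccati_pos m lam hpos f hf h
end

section
/- If f is not a constant function, then necessarily λ·m < 0 and f is strictly monotone on ℝ: strictly decreasing if m > 0, and strictly increasing if m < 0. -/
open Real

private lemma riccati_aux_const {g : ℝ → ℝ} (hg : ∀ t, HasDerivAt g 0 t) (t : ℝ) : g t = g 0 :=
  is_const_of_deriv_eq_zero (fun x => (hg x).differentiableAt)
    (fun x => (hg x).deriv) t 0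

private lemma riccati_aux_affine {G : ℝ → ℝ} (hG : ∀ t, HasDerivAt G 1 t) (t : ℝ) :
    G t = t + G 0 := by
  have h : ∀ s, HasDerivAt (fun x => G x - x) 0 s := by
    intro s
    have := (hG s).sub (hasDerivAt_id s); simp only [sub_self] at this; exact this
  have := riccati_aux_const h t
  simp only [sub_zero] at this
  linarith

private lemma riccati_aux_exp {c v : ℝ → ℝ} (hc : Continuous c)
    (hv : ∀ t, HasDerivAt v (c t * v t) t) (t : ℝ) :
    v t = v 0 * Real.exp (∫ s in (0:ℝ)..t, c s) := by
  set C : ℝ → ℝ := fun t => ∫ s in (0:ℝ)..t, c s with hCdef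
  have hC : ∀ t, HasDerivAt C (c t) t := fun t =>
    (hc.integral_hasStrictDerivAt 0 t).hasDerivAt
  have h : ∀ s, HasDerivAt (fun x => v x * Real.exp (-C x)) 0 s := by
    intro s
    have h1 : HasDerivAt (fun x => Real.exp (-C x)) (Real.exp (-C s) * (-(c s))) s :=
      by have := (Real.hasDerivAt_exp (-C s)).comp s ((hC s).neg); exact this
    have this : HasDerivAt (fun x => v x * Real.exp (-C x)) (c s * v s * Real.exp (-C s) + v s * (Real.exp (-C s) * -c s)) s := (hv s).mul h1
    convert this using 1
    ring
  have key := riccati_aux_const h t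
  have h0 : C 0 = 0 := by simp [hCdef]
  rw [h0, neg_zero, Real.exp_zero, mul_one] at key
  have h2 : Real.exp (-C t) * Real.exp (C t) = 1 := by
    rw [← Real.exp_add]; simp
  calc v t = v t * (Real.exp (-C t) * Real.exp (C t)) := by rw [h2, mul_one]
    _ = v t * Real.exp (-C t) * Real.exp (C t) := by ring
    _ = v 0 * Real.exp (C t) := by rw [key]

/-- If `f` is not constant, then `λ·m < 0` and `f` is strictly monotone:
strictly decreasing when `m > 0` and strictly increasing when `m < 0`. -/
theorem riccati_nonconstant_monotone (m lam : ℝ) (hm : m ≠ 0) (f : ℝ → ℝ)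
    (hf : ∀ t : ℝ, HasDerivAt f ((1 / m) * (f t) ^ 2 + lam) t)
    (hnc : ¬ ∃ c : ℝ, ∀ t : ℝ, f t = c) :
    lam * m < 0 ∧ (m > 0 → StrictAnti f) ∧ (m < 0 → StrictMono f) := by
  set k := lam * m with hk
  have hfc : Continuous f := Differentiable.continuous (fun t => (hf t).differentiableAt)
  set v : ℝ → ℝ := fun t => (1 / m) * f t ^ 2 + lam with hvdef
  have hmv : ∀ t, m * v t = f t ^ 2 + k := by
    intro t
    simp only [hvdef]
    field_simp
    rw [hk]; ring
  have hv : ∀ t, HasDerivAt v ((2 * f t / m) * v t) t := by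
    intro t
    have h2 : HasDerivAt (fun x => f x ^ 2) (2 * f t ^ 1 * v t) t := (hf t).pow 2
    have this : HasDerivAt (fun x => 1 / m * f x ^ 2 + lam) (1 / m * (2 * f t ^ 1 * v t)) t := (h2.const_mul (1 / m)).add_const lam
    convert this using 1
    ring
  have hcc : Continuous fun t => 2 * f t / m := by fun_prop
  have hvform : ∀ t, v t = v 0 * Real.exp (∫ s in (0:ℝ)..t, 2 * f s / m) :=
    riccati_aux_exp hcc hv
  have hsign : ∀ t, m * v t = (m * v 0) * Real.exp (∫ s in (0:ℝ)..t, 2 * f s / m) := by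
    intro t; rw [hvform t]; ring
  have hv0 : v 0 ≠ 0 := by
    intro h0
    apply hnc
    refine ⟨f 0, fun t => ?_⟩
    have : ∀ s, HasDerivAt f 0 s := by
      intro s
      have := hf s
      rwa [show (1 / m) * f s ^ 2 + lam = v s from rfl, hvform s, h0, zero_mul] at this
    exact riccati_aux_const this t
  -- Main claim : m * v 0 < 0
  have hmain : m * v 0 < 0 := by
    by_contra hcon
    push_neg at hcon
    have hpos0 : 0 < m * v 0 :=
      lt_of_le_of_ne hcon (fun h => hv0 (by
        rcases mul_eq_zero.1 h.symm with h' | h'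
        · exact absurd h' hm
        · exact h'))
    have hpos : ∀ t, 0 < f t ^ 2 + k := by
      intro t
      rw [← hmv t, hsign t]
      exact mul_pos hpos0 (Real.exp_pos _)
    rcases lt_trichotomy k 0 with hklt | hkeq | hkgt
    · -- k < 0 : log trick
      set a : ℝ := Real.sqrt (-k) with ha
      have ha0 : 0 < a := Real.sqrt_pos.2 (by linarith)
      have ha2 : a ^ 2 = -k := Real.sq_sqrt (by linarith)
      have hprod : ∀ t, 0 < (f t - a) * (f t + a) := by
        intro t
        have := hpos t
        nlinarith
      have hfa : ∀ t, f t + a ≠ 0 := by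
        intro t h
        have := hprod t
        rw [h, mul_zero] at this
        exact lt_irrefl 0 this
      have hfa2 : ∀ t, f t - a ≠ 0 := by
        intro t h
        have := hprod t
        rw [h, zero_mul] at this
        exact lt_irrefl 0 this
      set u : ℝ → ℝ := fun t => (f t - a) / (f t + a) with hu
      have hupos : ∀ t, 0 < u t := by
        intro t
        rcases mul_pos_iff.1 (hprod t) with ⟨h1, h2⟩ | ⟨h1, h2⟩
        · exact div_pos h1 h2
        · exact div_pos_of_neg_of_neg h1 h2
      set G : ℝ → ℝ := fun t => (m / (2 * a)) * Real.log (u t) with hG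
      have hGd : ∀ t, HasDerivAt G 1 t := by
        intro t
        have hu' : HasDerivAt u ((v t * (f t + a) - (f t - a) * v t) / (f t + a) ^ 2) t :=
          ((hf t).sub_const a).div ((hf t).add_const a) (hfa t)
        have hl : HasDerivAt (fun x => Real.log (u x))
            ((u t)⁻¹ * ((v t * (f t + a) - (f t - a) * v t) / (f t + a) ^ 2)) t :=
          (Real.hasDerivAt_log (ne_of_gt (hupos t))).comp t hu'
        have hD := hl.const_mul (m / (2 * a))
        have hvt : v t = ((f t - a) * (f t + a)) / m := by
          field_simp
          linear_combination hmv t + ha2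
        have heq : m / (2 * a) * ((u t)⁻¹ * ((v t * (f t + a) - (f t - a) * v t) / (f t + a) ^ 2)) = 1 := by
          rw [hu]
          simp only
          rw [inv_div, hvt]
          field_simp [hm, hfa t, hfa2 t, ne_of_gt ha0]
          ring
        rw [heq] at hD
        exact hD
      have haff := riccati_aux_affine hGd
      have hzero : G (-(G 0)) = 0 := by rw [haff]; ring
      rw [hG] at hzero
      simp only at hzero
      have hlz : Real.log (u (-(G 0))) = 0 := by
        rcases mul_eq_zero.1 hzero with h | h
        · exact absurd h (div_ne_zero hm (by positivity))
        · exact h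
      have hu1 : u (-(G 0)) = 1 := by
        rcases Real.log_eq_zero.1 hlz with h | h | h
        · exact absurd h (ne_of_gt (hupos _))
        · exact h
        · exfalso; nlinarith [hupos (-(G 0))]
      rw [hu] at hu1
      simp only at hu1
      rw [div_eq_one_iff_eq (hfa _)] at hu1
      nlinarith [ha0]
    · -- k = 0 : -m/f trick
      have hne : ∀ t, f t ≠ 0 := by
        intro t h
        have := hpos t
        rw [h, hkeq] at this
        simp at this
      set G : ℝ → ℝ := fun t => -(m / f t) with hG
      have hGd : ∀ t, HasDerivAt G 1 t := by
        intro t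
        have hD := ((hasDerivAt_const t m).div (hf t) (hne t)).neg
        have heq : -((0 * f t - m * v t) / (f t) ^ 2) = 1 := by
          have h1 : m * v t = f t ^ 2 + k := hmv t
          rw [hkeq, add_zero] at h1
          rw [zero_mul, zero_sub, neg_div, neg_neg, h1]
          exact div_self (pow_ne_zero 2 (hne t))
        rw [heq] at hD
        exact hD
      have haff := riccati_aux_affine hGd
      have hzero : G (-(G 0)) = 0 := by rw [haff]; ring
      rw [hG] at hzero
      simp only [neg_eq_zero, div_eq_zero_iff] at hzero
      rcases hzero with h | h
      · exact hm h
      · exact hne _ h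
    · -- k > 0 : arctan trick
      set b : ℝ := Real.sqrt k with hb
      have hb0 : 0 < b := Real.sqrt_pos.2 hkgt
      have hb2 : b ^ 2 = k := Real.sq_sqrt (le_of_lt hkgt)
      set G : ℝ → ℝ := fun t => (m / b) * Real.arctan (f t / b) with hG
      have hGd : ∀ t, HasDerivAt G 1 t := by
        intro t
        have h1 : HasDerivAt (fun x => f x / b) (v t / b) t := (hf t).div_const b
        have h2 : HasDerivAt (fun x => Real.arctan (f x / b))
            ((1 / (1 + (f t / b) ^ 2)) * (v t / b)) t :=
          by have := (Real.hasDerivAt_arctan (f t / b)).comp t h1; exact this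
        have hD := h2.const_mul (m / b)
        have heq : m / b * (1 / (1 + (f t / b) ^ 2) * (v t / b)) = 1 := by
          have hvt : v t = (f t ^ 2 + b ^ 2) / m := by
            field_simp
            linear_combination hmv t - hb2
          have hdnz : (0:ℝ) < 1 + (f t / b) ^ 2 := by positivity
          rw [hvt]
          field_simp
          ring
        rw [heq] at hD
        exact hD
      have haff := riccati_aux_affine hGd
      have hbound : ∀ t, |G t| ≤ |m| / b * (π / 2) := by
        intro t
        rw [hG]
        simp only
        rw [abs_mul, abs_div, abs_of_pos hb0]
        have h1 : |Real.arctan (f t / b)| ≤ π / 2 := by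
          rw [abs_le]
          constructor
          · linarith [Real.neg_pi_div_two_lt_arctan (f t / b)]
          · linarith [Real.arctan_lt_pi_div_two (f t / b)]
        exact mul_le_mul_of_nonneg_left h1 (by positivity)
      have hthis := hbound (|m| / b * (π / 2) + 1 - G 0)
      rw [haff (|m| / b * (π / 2) + 1 - G 0), sub_add_cancel] at hthis
      have hπ : 0 < π := Real.pi_pos
      rw [abs_of_pos (by positivity)] at hthis
      linarith
  -- conclude
  have hk0 : k < 0 := by
    have := hmv 0
    nlinarith [sq_nonneg (f 0), hmain]
  refine ⟨hk0, ?_, ?_⟩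
  · intro hmpos
    apply strictAnti_of_deriv_neg
    intro t
    rw [(hf t).deriv]
    show v t < 0
    have hvt : m * v t < 0 := by
      rw [hsign t]
      exact mul_neg_of_neg_of_pos hmain (Real.exp_pos _)
    nlinarith
  · intro hmneg
    apply strictMono_of_deriv_pos
    intro t
    rw [(hf t).deriv]
    show 0 < v t
    have hvt : m * v t < 0 := by
      rw [hsign t]
      exact mul_neg_of_neg_of_pos hmain (Real.exp_pos _)
    nlinarith
end

section
/- If there exists a sequence (tₙ) of real numbers with tₙ → +∞ such that f(tₙ) → f(0), then f is constant. (This recurrence-implies-constancy principle is the analytic core of the compactness argument in the proofs of Lemma 2.3 and Lemma 6.3 of the paper, where the values of f along an integral curve in a compact quotient accumulate.) -/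
/-- Recurrence implies constancy: if there is a sequence `tₙ → +∞` with
`f(tₙ) → f(0)`, then `f` is constant. -/
theorem riccati_recurrent_constant (m lam : ℝ) (hm : m ≠ 0) (f : ℝ → ℝ)
    (hf : ∀ t : ℝ, HasDerivAt f ((1 / m) * (f t) ^ 2 + lam) t)
    (hrec : ∃ t : ℕ → ℝ, Filter.Tendsto t Filter.atTop Filter.atTop ∧
      Filter.Tendsto (fun n => f (t n)) Filter.atTop (nhds (f 0))) :
    ∃ c : ℝ, ∀ s : ℝ, f s = c := by
  obtain ⟨t, ht, hft⟩ := hrec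
  set h : ℝ → ℝ := fun s => (1 / m) * (f s) ^ 2 + lam with hh
  have hfc : Continuous f :=
    continuous_iff_continuousAt.mpr fun s => (hf s).differentiableAt.continuousAt
  have hcont : Continuous (fun x => 2 * f x / m) := by continuity
  set F : ℝ → ℝ := fun u => ∫ x in (0:ℝ)..u, 2 * f x / m with hF
  have hFd : ∀ s, HasDerivAt F (2 * f s / m) s := fun s =>
    (hcont.integral_hasStrictDerivAt 0 s).hasDerivAt
  have hhd : ∀ s, HasDerivAt h ((2 * f s / m) * h s) s := by
    intro s
    have := (((hf s).pow 2).const_mul (1 / m)).add_const lam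
    refine this.congr_deriv ?_
    simp only [hh]
    push_cast
    ring
  set G : ℝ → ℝ := fun s => h s * Real.exp (-(F s)) with hG
  have hGd : ∀ s, HasDerivAt G 0 s := by
    intro s
    have hexp : HasDerivAt (fun u => Real.exp (-(F u)))
        (Real.exp (-(F s)) * (-(2 * f s / m))) s := by
      exact (Real.hasDerivAt_exp _).comp s ((hFd s).neg)
    have := (hhd s).mul hexp
    refine this.congr_deriv ?_
    ring
  have hGc : ∀ s, G s = G 0 := by
    intro s
    exact is_const_of_deriv_eq_zero (fun x => (hGd x).differentiableAt)
      (fun x => (hGd x).deriv) s 0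
  have hF0 : F 0 = 0 := by simp [hF]
  have hkey : ∀ s, h s = h 0 * Real.exp (F s) := by
    intro s
    have hGs := hGc s
    simp only [hG, hF0, neg_zero, Real.exp_zero, mul_one] at hGs
    rw [← hGs, mul_assoc, ← Real.exp_add]
    simp
  have hderiv : ∀ s, deriv f s = h s := fun s => (hf s).deriv
  rcases lt_trichotomy (h 0) 0 with h0 | h0 | h0
  · -- h < 0 everywhere, f strictly antitone: contradiction with recurrence
    have hneg : ∀ s, deriv f s < 0 := by
      intro s
      rw [hderiv s, hkey s]
      exact mul_neg_of_neg_of_pos h0 (Real.exp_pos _)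
    have hanti : StrictAnti f := strictAnti_of_deriv_neg hneg
    exfalso
    have h01 : f 1 < f 0 := hanti (by norm_num)
    have hev : ∀ᶠ n in Filter.atTop, f (t n) ≤ f 1 := by
      filter_upwards [ht.eventually_ge_atTop 1] with n hn
      exact (hanti.antitone hn)
    have := le_of_tendsto hft hev
    linarith
  · refine ⟨f 0, fun s => ?_⟩
    have : ∀ x, deriv f x = 0 := by
      intro x
      rw [hderiv x, hkey x, h0, zero_mul]
    exact is_const_of_deriv_eq_zero (fun x => (hf x).differentiableAt) this s 0
  · have hpos : ∀ s, 0 < deriv f s := by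
      intro s
      rw [hderiv s, hkey s]
      exact mul_pos h0 (Real.exp_pos _)
    have hmono : StrictMono f := strictMono_of_deriv_pos hpos
    exfalso
    have h01 : f 0 < f 1 := hmono (by norm_num)
    have hev : ∀ᶠ n in Filter.atTop, f 1 ≤ f (t n) := by
      filter_upwards [ht.eventually_ge_atTop 1] with n hn
      exact hmono.monotone hn
    have := ge_of_tendsto hft hev
    linarith
end

section
/- Let x ∈ 𝔤 and let q := (1/2)(ad x + (ad x)*) − (‖x‖²/m)·P_x be the associated endomorphism of 𝔤. If tr(q ∘ ad x) = 0, then ad x + (ad x)* = 0, i.e., ad x is skew-adjoint with respect to the inner product. (This is the algebraic content of Lemma 2.5 of the paper: for a left-invariant metric on a Lie group, a left-invariant vector field X is Killing precisely when ad_X is skew-adjoint, and the tensor (1/2)L_X g − (1/m)X*⊗X* = q corresponds to the endomorphism (1/2)(ad x + (ad x)*) − (‖x‖²/m)P_x.) -/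
open RealInnerProductSpace

lemma trace_eq_sum_inner' {E : Type*} [NormedAddCommGroup E] [InnerProductSpace ℝ E]
    [FiniteDimensional ℝ E] (f : E →ₗ[ℝ] E) :
    LinearMap.trace ℝ E f = ∑ i, ⟪stdOrthonormalBasis ℝ E i, f (stdOrthonormalBasis ℝ E i)⟫ := by
  classical
  let b := stdOrthonormalBasis ℝ E
  rw [LinearMap.trace_eq_matrix_trace ℝ b.toBasis, Matrix.trace]
  congr 1
  ext i
  rw [Matrix.diag_apply, LinearMap.toMatrix_apply, OrthonormalBasis.coe_toBasis_repr_apply,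
    OrthonormalBasis.repr_apply_apply, OrthonormalBasis.coe_toBasis]

lemma trace_adjoint' {E : Type*} [NormedAddCommGroup E] [InnerProductSpace ℝ E]
    [FiniteDimensional ℝ E] (f : E →ₗ[ℝ] E) :
    LinearMap.trace ℝ E (LinearMap.adjoint f) = LinearMap.trace ℝ E f := by
  rw [trace_eq_sum_inner', trace_eq_sum_inner']
  refine Finset.sum_congr rfl fun i _ => ?_
  rw [LinearMap.adjoint_inner_right, real_inner_comm]

lemma eq_zero_of_trace_adjoint_comp_self {E : Type*} [NormedAddCommGroup E]
    [InnerProductSpace ℝ E] [FiniteDimensional ℝ E] (f : E →ₗ[ℝ] E)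
    (h : LinearMap.trace ℝ E (LinearMap.adjoint f ∘ₗ f) = 0) : f = 0 := by
  rw [trace_eq_sum_inner'] at h
  have hterm : ∀ i, ⟪stdOrthonormalBasis ℝ E i,
      (LinearMap.adjoint f ∘ₗ f) (stdOrthonormalBasis ℝ E i)⟫ = ‖f (stdOrthonormalBasis ℝ E i)‖ ^ 2 := by
    intro i
    rw [LinearMap.comp_apply, LinearMap.adjoint_inner_right, real_inner_self_eq_norm_sq]
  rw [Finset.sum_congr rfl (fun i _ => hterm i)] at h
  have hz : ∀ i ∈ Finset.univ, f (stdOrthonormalBasis ℝ E i) = 0 := by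
    intro i _
    have := (Finset.sum_eq_zero_iff_of_nonneg (fun i _ => sq_nonneg _)).mp h i (Finset.mem_univ i)
    exact norm_eq_zero.mp (by nlinarith [norm_nonneg (f (stdOrthonormalBasis ℝ E i))])
  apply Module.Basis.ext (stdOrthonormalBasis ℝ E).toBasis
  intro i
  simpa using hz i (Finset.mem_univ i)

/-- Lemma 2.5 (algebraic form): let `𝔤` be a finite-dimensional real Lie algebra with an
inner product (the Lie algebra structure is given by a bilinear bracket that is
antisymmetric and satisfies the Jacobi identity), let `x ∈ 𝔤`, write `ad x = bracket x`,
and let `q = (1/2)(ad x + (ad x)*) − (‖x‖²/m)·P_x`, where `P_x` is the orthogonal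
projection onto the span of `x`.  If `tr(q ∘ ad x) = 0`, then `ad x + (ad x)* = 0`,
i.e. `ad x` is skew-adjoint with respect to the inner product. -/
theorem ad_skew_adjoint_of_trace_zero (𝔤 : Type*) [NormedAddCommGroup 𝔤]
    [InnerProductSpace ℝ 𝔤] [FiniteDimensional ℝ 𝔤]
    (bracket : 𝔤 →ₗ[ℝ] 𝔤 →ₗ[ℝ] 𝔤)
    (hanti : ∀ y z : 𝔤, bracket y z = -bracket z y)
    (hjacobi : ∀ y z w : 𝔤,
      bracket y (bracket z w) = bracket (bracket y z) w + bracket z (bracket y w))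
    (m : ℝ) (hm : m ≠ 0) (x : 𝔤) (q : 𝔤 →ₗ[ℝ] 𝔤)
    (hq : q = (1 / 2 : ℝ) • (bracket x + LinearMap.adjoint (bracket x))
        - (‖x‖ ^ 2 / m) •
          ((ℝ ∙ x).subtype ∘ₗ (Submodule.orthogonalProjection (ℝ ∙ x) : 𝔤 →L[ℝ] (ℝ ∙ x)).toLinearMap))
    (htr : LinearMap.trace ℝ 𝔤 (q ∘ₗ bracket x) = 0) :
    bracket x + LinearMap.adjoint (bracket x) = 0 := by
  set A := bracket x with hA
  have hxx : A x = 0 := by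
    have h := hanti x x
    have : A x + A x = 0 := by nth_rewrite 1 [h]; simp [hA]
    have h2 : (2 : ℝ) • A x = 0 := by rw [two_smul]; exact this
    simpa using (smul_eq_zero.mp h2).resolve_left (by norm_num)
  set P : 𝔤 →ₗ[ℝ] 𝔤 :=
    (ℝ ∙ x).subtype ∘ₗ (Submodule.orthogonalProjection (ℝ ∙ x) : 𝔤 →L[ℝ] (ℝ ∙ x)).toLinearMap with hP
  have hAP : A ∘ₗ P = 0 := by
    ext y
    obtain ⟨c, hc⟩ := Submodule.mem_span_singleton.mp (Submodule.orthogonalProjection (ℝ ∙ x) y).2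
    simp only [LinearMap.comp_apply, hP, LinearMap.zero_apply,
      ContinuousLinearMap.coe_coe, Submodule.coe_subtype]
    rw [← hc, map_smul, hxx, smul_zero]
  set B := LinearMap.adjoint A with hB
  set S := A + B with hS
  -- trace(q ∘ A) = (1/2) (tr (A∘A) + tr (B∘A))
  have hqA : LinearMap.trace ℝ 𝔤 (q ∘ₗ A) =
      (1 / 2 : ℝ) * (LinearMap.trace ℝ 𝔤 (A ∘ₗ A) + LinearMap.trace ℝ 𝔤 (B ∘ₗ A)) := by
    have hPA : LinearMap.trace ℝ 𝔤 (P ∘ₗ A) = 0 := by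
      rw [LinearMap.trace_comp_comm', hAP, map_zero]
    rw [hq, LinearMap.sub_comp, LinearMap.smul_comp, LinearMap.smul_comp, LinearMap.add_comp,
      map_sub, map_smul, map_smul, map_add, hPA]
    simp only [smul_eq_mul, smul_zero]; ring
  have htBB : LinearMap.trace ℝ 𝔤 (B ∘ₗ B) = LinearMap.trace ℝ 𝔤 (A ∘ₗ A) := by
    rw [hB, ← LinearMap.adjoint_comp, trace_adjoint']
  have htAB : LinearMap.trace ℝ 𝔤 (A ∘ₗ B) = LinearMap.trace ℝ 𝔤 (B ∘ₗ A) :=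
    LinearMap.trace_comp_comm' B A
  have hSadj : LinearMap.adjoint S = S := by
    rw [hS, map_add, hB, LinearMap.adjoint_adjoint, add_comm]
  have hSS : LinearMap.trace ℝ 𝔤 (LinearMap.adjoint S ∘ₗ S) = 0 := by
    rw [hSadj, hS, LinearMap.add_comp, LinearMap.comp_add, LinearMap.comp_add,
      map_add, map_add, map_add, htBB, htAB]
    have := hqA ▸ htr
    linarith
  exact eq_zero_of_trace_adjoint_comp_self S hSS
end

section
/- Let A be a linear endomorphism of V and x ∈ V with A x = 0. If tr(((1/2)(A + A*) − (‖x‖²/m)·P_x) ∘ A) = 0, then A + A* = 0, i.e., A is skew-adjoint. (This is the key linear-algebra step in the proof of Lemma 2.5 of the paper, applied there with A = ad_X, using that tr(A²) = tr((A*)²), that A ∘ P_x = 0 since A x = 0, and that a self-adjoint endomorphism whose square has trace zero vanishes.) -/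
open scoped InnerProductSpace

lemma trace_eq_sum_inner'_s10 {V : Type*} [NormedAddCommGroup V]
    [InnerProductSpace ℝ V] [FiniteDimensional ℝ V] {ι : Type*} [Fintype ι] [DecidableEq ι]
    (b : OrthonormalBasis ι ℝ V) (T : V →ₗ[ℝ] V) :
    LinearMap.trace ℝ V T = ∑ i, ⟪b i, T (b i)⟫_ℝ := by
  rw [LinearMap.trace_eq_matrix_trace ℝ b.toBasis, Matrix.trace]
  congr 1
  ext i
  rw [Matrix.diag_apply, LinearMap.toMatrix_apply, OrthonormalBasis.coe_toBasis,
    ← b.repr_apply_apply, OrthonormalBasis.coe_toBasis_repr_apply]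

/-- Key linear-algebra step in the proof of Lemma 2.5: if `A x = 0` and
`tr(((1/2)(A + A*) − (‖x‖²/m)·P_x) ∘ A) = 0`, then `A + A* = 0`, i.e. `A` is skew-adjoint. -/
theorem skew_adjoint_of_trace_zero (V : Type*) [NormedAddCommGroup V]
    [InnerProductSpace ℝ V] [FiniteDimensional ℝ V]
    (m : ℝ) (hm : m ≠ 0) (A : V →ₗ[ℝ] V) (x : V) (hAx : A x = 0)
    (htr : LinearMap.trace ℝ V
      (((1 / 2 : ℝ) • (A + LinearMap.adjoint A)
          - (‖x‖ ^ 2 / m) •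
            ((ℝ ∙ x).subtype ∘ₗ (Submodule.orthogonalProjectionOnto (ℝ ∙ x) : V →L[ℝ] (ℝ ∙ x)).toLinearMap))
        ∘ₗ A) = 0) :
    A + LinearMap.adjoint A = 0 := by
  set S := A + LinearMap.adjoint A with hS
  set P : V →ₗ[ℝ] V :=
    (ℝ ∙ x).subtype ∘ₗ (Submodule.orthogonalProjectionOnto (ℝ ∙ x) : V →L[ℝ] (ℝ ∙ x)).toLinearMap with hP
  have hSadj : LinearMap.adjoint S = S := by
    rw [hS, map_add, LinearMap.adjoint_adjoint, add_comm]
  have hAP : A ∘ₗ P = 0 := by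
    ext v
    have hmem : P v ∈ (ℝ ∙ x) := SetLike.coe_mem _
    obtain ⟨c, hc⟩ := Submodule.mem_span_singleton.mp hmem
    simp only [LinearMap.comp_apply, LinearMap.zero_apply]
    rw [← hc, map_smul, hAx, smul_zero]
  have htrPA : LinearMap.trace ℝ V (P ∘ₗ A) = 0 := by
    rw [← LinearMap.trace_comp_comm', hAP, map_zero]
  have htrSA : LinearMap.trace ℝ V (S ∘ₗ A) = 0 := by
    have hexp : ((1 / 2 : ℝ) • S - (‖x‖ ^ 2 / m) • P) ∘ₗ A
        = (1 / 2 : ℝ) • (S ∘ₗ A) - (‖x‖ ^ 2 / m) • (P ∘ₗ A) := by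
      ext v; simp [LinearMap.sub_apply, LinearMap.smul_apply]
    rw [hexp, map_sub, map_smul, map_smul, htrPA, smul_zero, sub_zero,
      smul_eq_mul] at htr
    linarith
  obtain b := stdOrthonormalBasis ℝ V
  have htr_adj : ∀ T : V →ₗ[ℝ] V,
      LinearMap.trace ℝ V (LinearMap.adjoint T) = LinearMap.trace ℝ V T := by
    intro T
    rw [trace_eq_sum_inner'_s10 b, trace_eq_sum_inner'_s10 b]
    refine Finset.sum_congr rfl fun i _ => ?_
    rw [LinearMap.adjoint_inner_right, real_inner_comm]
  have htrSA' : LinearMap.trace ℝ V (S ∘ₗ LinearMap.adjoint A) = 0 := by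
    have : LinearMap.adjoint (S ∘ₗ LinearMap.adjoint A) = A ∘ₗ S := by
      rw [LinearMap.adjoint_comp, LinearMap.adjoint_adjoint, hSadj]
    calc LinearMap.trace ℝ V (S ∘ₗ LinearMap.adjoint A)
        = LinearMap.trace ℝ V (LinearMap.adjoint (S ∘ₗ LinearMap.adjoint A)) :=
          (htr_adj _).symm
      _ = LinearMap.trace ℝ V (A ∘ₗ S) := by rw [this]
      _ = LinearMap.trace ℝ V (S ∘ₗ A) := by rw [LinearMap.trace_comp_comm']
      _ = 0 := htrSA
  have htrSS : LinearMap.trace ℝ V (S ∘ₗ S) = 0 := by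
    have : S ∘ₗ S = S ∘ₗ A + S ∘ₗ LinearMap.adjoint A := by
      rw [hS]; ext v; simp; abel
    rw [this, map_add, htrSA, htrSA', add_zero]
  have hsymm : ∀ u v : V, ⟪u, S v⟫_ℝ = ⟪S u, v⟫_ℝ := fun u v => by
    nth_rewrite 1 [← hSadj]
    exact LinearMap.adjoint_inner_right S u v
  have hsum : ∑ i, ‖S (b i)‖ ^ 2 = 0 := by
    rw [← htrSS, trace_eq_sum_inner'_s10 b]
    refine Finset.sum_congr rfl fun i _ => ?_
    rw [LinearMap.comp_apply, hsymm, real_inner_self_eq_norm_sq]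
  have hzero : ∀ i, S (b i) = 0 := by
    intro i
    have h1 : ∀ j ∈ Finset.univ, (0:ℝ) ≤ ‖S (b j)‖ ^ 2 := fun j _ => sq_nonneg _
    have := (Finset.sum_eq_zero_iff_of_nonneg h1).mp hsum i (Finset.mem_univ i)
    have : ‖S (b i)‖ = 0 := by nlinarith [norm_nonneg (S (b i))]
    exact norm_eq_zero.mp this
  exact b.toBasis.ext fun i => by simpa using hzero i
end
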